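/- Let w_1 ∈ K, let (g̃_t)_{t≥1} be arbitrary vectors of H, and define the iterates w_{t+1} = Π_K(w_t − η_t g̃_t) with η_t = D/(√2 · √(∑_{τ=1}^t ‖g̃_τ‖²)) whenever the denominator is positive, and w_{t+1} = w_t whenever it is zero. Then for every w* ∈ K and every T ≥ 1, ∑_{t=1}^T ⟨g̃_t, w_t − w*⟩ ≤ √2 · D · √(∑_{t=1}^T ‖g̃_t‖²). -/

import Mathlib

open Finset
open scoped RealInnerProductSpace

lemma aux_sum_div_sqrt (b : ℕ → ℝ) (hb : ∀ t, 0 ≤ b t) :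
    ∀ T : ℕ, ∑ t ∈ Icc 1 T, b t / Real.sqrt (∑ τ ∈ Icc 1 t, b τ)
      ≤ 2 * Real.sqrt (∑ τ ∈ Icc 1 T, b τ) := by
  intro T
  induction T with
  | zero => simp
  | succ T ih =>
    rw [Finset.sum_Icc_succ_top (Nat.le_add_left 1 T), Finset.sum_Icc_succ_top (Nat.le_add_left 1 T)]
    set B := ∑ τ ∈ Icc 1 T, b τ with hB
    have hB0 : 0 ≤ B := Finset.sum_nonneg fun i _ => hb i
    have hb0 : 0 ≤ b (T + 1) := hb _
    have hB'0 : 0 ≤ B + b (T + 1) := by linarith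
    rcases eq_or_lt_of_le hB'0 with h | h
    · have h1 : B = 0 := by linarith
      have h2 : b (T + 1) = 0 := by linarith
      simp only [h2, ← h, h1] at *
      simpa using ih
    · have hsB' : 0 < Real.sqrt (B + b (T + 1)) := Real.sqrt_pos.mpr h
      have hsq' : Real.sqrt (B + b (T + 1)) ^ 2 = B + b (T + 1) := Real.sq_sqrt hB'0
      have hsq : Real.sqrt B ^ 2 = B := Real.sq_sqrt hB0
      have hsB : 0 ≤ Real.sqrt B := Real.sqrt_nonneg _
      have key : b (T + 1) / Real.sqrt (B + b (T + 1)) ≤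
          2 * (Real.sqrt (B + b (T + 1)) - Real.sqrt B) := by
        rw [div_le_iff₀ hsB']
        nlinarith [sq_nonneg (Real.sqrt (B + b (T + 1)) - Real.sqrt B)]
      linarith

lemma aux_abel (c a : ℕ → ℝ) (M : ℝ)
    (hc0 : ∀ t, 1 ≤ t → 0 ≤ c t)
    (hmono : ∀ t, 1 ≤ t → c t ≤ c (t + 1))
    (haM : ∀ t, 1 ≤ t → a t ≤ M) :
    ∀ T : ℕ, 1 ≤ T → ∑ t ∈ Icc 1 T, c t * (a t - a (t + 1)) ≤ c T * (M - a (T + 1)) := by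
  intro T hT
  induction T, hT using Nat.le_induction with
  | base =>
    simp only [Finset.Icc_self, Finset.sum_singleton]
    have := haM 1 le_rfl
    have := hc0 1 le_rfl
    nlinarith
  | succ T hT ih =>
    rw [Finset.sum_Icc_succ_top (by omega)]
    have h1 : a (T + 1) ≤ M := haM (T + 1) (Nat.le_add_left 1 T)
    have h2 : c T ≤ c (T + 1) := hmono T hT
    have h3 : 0 ≤ c (T + 1) := hc0 (T + 1) (Nat.le_add_left 1 T)
    nlinarith

lemma aux_var {H : Type*} [NormedAddCommGroup H] [InnerProductSpace ℝ H]
    (K : Set H) (hKconvex : Convex ℝ K) (proj : H → H)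
    (hproj_mem : ∀ v, proj v ∈ K)
    (hproj_min : ∀ v, ∀ u ∈ K, ‖v - proj v‖ ≤ ‖v - u‖)
    (v : H) (u : H) (hu : u ∈ K) : ‖proj v - u‖ ^ 2 ≤ ‖v - u‖ ^ 2 := by
  haveI : Nonempty K := ⟨⟨proj v, hproj_mem v⟩⟩
  have hbdd : BddBelow (Set.range fun z : K => ‖v - (z : H)‖) := by
    refine ⟨0, ?_⟩; rintro x ⟨z, rfl⟩; exact norm_nonneg _
  have h1 : ‖v - proj v‖ = ⨅ z : K, ‖v - (z : H)‖ :=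
    le_antisymm (le_ciInf fun z => hproj_min v z z.2) (ciInf_le hbdd ⟨proj v, hproj_mem v⟩)
  have h2 : ⟪v - proj v, u - proj v⟫ ≤ 0 :=
    ((norm_eq_iInf_iff_real_inner_le_zero hKconvex (hproj_mem v)).mp h1) u hu
  have h3 : v - u = (v - proj v) + (proj v - u) := by abel
  have h4 : ‖v - u‖ ^ 2 = ‖v - proj v‖ ^ 2 + 2 * ⟪v - proj v, proj v - u⟫ + ‖proj v - u‖ ^ 2 := by
    rw [h3, @norm_add_sq_real]
  have h5 : ⟪v - proj v, proj v - u⟫ = - ⟪v - proj v, u - proj v⟫ := by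
    rw [← inner_neg_right, neg_sub]
  nlinarith [sq_nonneg ‖v - proj v‖]

/-- deterministic pathwise linearized-regret bound for adaptive
projected descent fed with arbitrary (possibly noise-corrupted) vectors `g̃_t`. -/
theorem stmt19
    {H : Type*} [NormedAddCommGroup H] [InnerProductSpace ℝ H]
    (K : Set H) (hKne : K.Nonempty) (hKclosed : IsClosed K) (hKconvex : Convex ℝ K)
    (D : ℝ) (hD : ∀ w ∈ K, ∀ v ∈ K, ‖w - v‖ ≤ D)
    (proj : H → H)
    (hproj_mem : ∀ v, proj v ∈ K)
    (hproj_min : ∀ v, ∀ u ∈ K, ‖v - proj v‖ ≤ ‖v - u‖)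
    (gt : ℕ → H)
    (w : ℕ → H) (hw1 : w 1 ∈ K)
    (hiter_pos : ∀ t, 1 ≤ t → 0 < Real.sqrt (∑ τ ∈ Icc 1 t, ‖gt τ‖ ^ 2) →
      w (t + 1) = proj (w t -
        (D / (Real.sqrt 2 * Real.sqrt (∑ τ ∈ Icc 1 t, ‖gt τ‖ ^ 2))) • gt t))
    (hiter_zero : ∀ t, 1 ≤ t → Real.sqrt (∑ τ ∈ Icc 1 t, ‖gt τ‖ ^ 2) = 0 →
      w (t + 1) = w t)
    (wstar : H) (hwstar : wstar ∈ K)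
    (T : ℕ) (hT : 1 ≤ T) :
    (∑ t ∈ Icc 1 T, ⟪gt t, w t - wstar⟫) ≤
      Real.sqrt 2 * D * Real.sqrt (∑ t ∈ Icc 1 T, ‖gt t‖ ^ 2) := by
  set S : ℕ → ℝ := fun t => ∑ τ ∈ Icc 1 t, ‖gt τ‖ ^ 2 with hSdef
  have hS0 : ∀ t, 0 ≤ S t := fun t => Finset.sum_nonneg fun i _ => sq_nonneg _
  have hSmono : ∀ t, S t ≤ S (t + 1) := by
    intro t
    have h1 : S (t + 1) = S t + ‖gt (t + 1)‖ ^ 2 :=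
      Finset.sum_Icc_succ_top (Nat.le_add_left 1 t) _
    nlinarith [sq_nonneg ‖gt (t + 1)‖]
  have hDnn : 0 ≤ D := by
    have := hD (w 1) hw1 (w 1) hw1; simpa using this
  have hwK : ∀ t, 1 ≤ t → w t ∈ K := by
    intro t ht
    induction t, ht using Nat.le_induction with
    | base => exact hw1
    | succ t ht ih =>
      rcases eq_or_lt_of_le (Real.sqrt_nonneg (S t)) with h | h
      · rw [hiter_zero t ht h.symm]; exact ih
      · rw [hiter_pos t ht h]; exact hproj_mem _
  rcases eq_or_lt_of_le hDnn with hD0 | hDpos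
  · -- degenerate case D = 0
    have hz : ∀ t, 1 ≤ t → w t - wstar = 0 := by
      intro t ht
      have h1 := hD (w t) (hwK t ht) wstar hwstar
      have h2 : ‖w t - wstar‖ ≤ 0 := by rw [hD0]; exact h1
      have h3 : ‖w t - wstar‖ = 0 := le_antisymm h2 (norm_nonneg _)
      exact norm_eq_zero.mp h3
    have hzero : ∑ t ∈ Icc 1 T, ⟪gt t, w t - wstar⟫ = 0 :=
      Finset.sum_eq_zero fun t ht => by
        rw [hz t (Finset.mem_Icc.mp ht).1]; exact inner_zero_right _
    rw [hzero, ← hD0]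
    simp
  · -- main case D > 0
    set a : ℕ → ℝ := fun t => ‖w t - wstar‖ ^ 2 with hadef
    set c : ℕ → ℝ := fun t => Real.sqrt 2 * Real.sqrt (S t) / D with hcdef
    have hs2 : (0:ℝ) < Real.sqrt 2 := Real.sqrt_pos.mpr (by norm_num)
    have hc0 : ∀ t, 0 ≤ c t := fun t =>
      div_nonneg (mul_nonneg hs2.le (Real.sqrt_nonneg _)) hDpos.le
    have hcmono : ∀ t, c t ≤ c (t + 1) := by
      intro t
      have h1 : Real.sqrt (S t) ≤ Real.sqrt (S (t + 1)) := Real.sqrt_le_sqrt (hSmono t)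
      simp only [hcdef]
      gcongr
    have key : ∀ t, 1 ≤ t →
        ⟪gt t, w t - wstar⟫ ≤ c t * (a t - a (t + 1)) / 2 + ‖gt t‖ ^ 2 / (2 * c t) := by
      intro t ht
      rcases eq_or_lt_of_le (Real.sqrt_nonneg (S t)) with h | h
      · -- sqrt (S t) = 0
        have hSt : S t = 0 := by
          have h1 := Real.sqrt_eq_zero'.mp h.symm
          linarith [hS0 t]
        have hgt0 : gt t = 0 := by
          have hle : ‖gt t‖ ^ 2 ≤ S t :=
            Finset.single_le_sum (f := fun τ => ‖gt τ‖ ^ 2)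
              (fun i _ => sq_nonneg _) (Finset.mem_Icc.mpr ⟨ht, le_rfl⟩)
          have h2 : ‖gt t‖ = 0 := by nlinarith [sq_nonneg ‖gt t‖, norm_nonneg (gt t)]
          exact norm_eq_zero.mp h2
        have hw' : w (t + 1) = w t := hiter_zero t ht h.symm
        have hct : c t = 0 := by simp [hcdef, ← h]
        rw [hgt0, hct]
        simp [hadef, hw']
      · -- sqrt (S t) > 0
        set η := D / (Real.sqrt 2 * Real.sqrt (S t)) with hηdef
        have hηpos : 0 < η := div_pos hDpos (mul_pos hs2 h)
        have hiter : w (t + 1) = proj (w t - η • gt t) := hiter_pos t ht h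
        have hproj2 := aux_var K hKconvex proj hproj_mem hproj_min (w t - η • gt t) wstar hwstar
        rw [← hiter] at hproj2
        have hexp : ‖(w t - η • gt t) - wstar‖ ^ 2 =
            a t - 2 * η * ⟪gt t, w t - wstar⟫ + η ^ 2 * ‖gt t‖ ^ 2 := by
          have h3 : (w t - η • gt t) - wstar = (w t - wstar) - η • gt t := by abel
          rw [h3, @norm_sub_sq_real, real_inner_smul_right, norm_smul, real_inner_comm]
          rw [Real.norm_eq_abs, abs_of_pos hηpos, mul_pow]
          simp only [hadef]
          ring
        have hstep : a (t + 1) ≤ a t - 2 * η * ⟪gt t, w t - wstar⟫ + η ^ 2 * ‖gt t‖ ^ 2 := by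
          rw [← hexp]; exact hproj2
        have hctpos : 0 < c t := div_pos (mul_pos hs2 h) hDpos
        have hrhs : c t * (a t - a (t + 1)) / 2 + ‖gt t‖ ^ 2 / (2 * c t)
            = (a t - a (t + 1)) / (2 * η) + η * ‖gt t‖ ^ 2 / 2 := by
          simp only [hcdef, hηdef]
          have h1 : Real.sqrt (S t) ≠ 0 := ne_of_gt h
          have h2 : Real.sqrt 2 ≠ 0 := ne_of_gt hs2
          have h3 : D ≠ 0 := ne_of_gt hDpos
          field_simp
        rw [hrhs]
        have h2η : (0:ℝ) < 2 * η := by linarith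
        have hA : (a t - a (t + 1)) / (2 * η) * (2 * η) = a t - a (t + 1) :=
          div_mul_cancel₀ _ (ne_of_gt h2η)
        nlinarith [hstep, hA, h2η, hηpos]
    have hsum : ∑ t ∈ Icc 1 T, ⟪gt t, w t - wstar⟫
        ≤ ∑ t ∈ Icc 1 T, (c t * (a t - a (t + 1)) / 2 + ‖gt t‖ ^ 2 / (2 * c t)) :=
      Finset.sum_le_sum fun t ht => key t (Finset.mem_Icc.mp ht).1
    rw [Finset.sum_add_distrib] at hsum
    have hA : ∑ t ∈ Icc 1 T, c t * (a t - a (t + 1)) ≤ c T * (D ^ 2 - a (T + 1)) :=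
      aux_abel c a (D ^ 2) (fun t _ => hc0 t) (fun t _ => hcmono t)
        (fun t ht => by
          have h1 := hD (w t) (hwK t ht) wstar hwstar
          simp only [hadef]
          nlinarith [norm_nonneg (w t - wstar)]) T hT
    have hA' : ∑ t ∈ Icc 1 T, c t * (a t - a (t + 1)) / 2 ≤ c T * D ^ 2 / 2 := by
      rw [← Finset.sum_div]
      have haTnn : 0 ≤ a (T + 1) := sq_nonneg _
      have := hc0 T
      nlinarith
    have hB : ∀ t, 1 ≤ t → ‖gt t‖ ^ 2 / (2 * c t)
        = (D / (2 * Real.sqrt 2)) * (‖gt t‖ ^ 2 / Real.sqrt (S t)) := by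
      intro t _
      rcases eq_or_lt_of_le (Real.sqrt_nonneg (S t)) with h | h
      · have hct : c t = 0 := by simp [hcdef, ← h]
        rw [hct, ← h]
        simp
      · simp only [hcdef]
        have h1 : Real.sqrt (S t) ≠ 0 := ne_of_gt h
        have h2 : Real.sqrt 2 ≠ 0 := ne_of_gt hs2
        have h3 : D ≠ 0 := ne_of_gt hDpos
        field_simp
    have hBsum : ∑ t ∈ Icc 1 T, ‖gt t‖ ^ 2 / (2 * c t)
        ≤ D / (2 * Real.sqrt 2) * (2 * Real.sqrt (S T)) := by
      have he : ∑ t ∈ Icc 1 T, ‖gt t‖ ^ 2 / (2 * c t)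
          = D / (2 * Real.sqrt 2) * ∑ t ∈ Icc 1 T, ‖gt t‖ ^ 2 / Real.sqrt (S t) := by
        rw [Finset.mul_sum]
        exact Finset.sum_congr rfl fun t ht => hB t (Finset.mem_Icc.mp ht).1
      rw [he]
      have hpos : 0 ≤ D / (2 * Real.sqrt 2) := by positivity
      exact mul_le_mul_of_nonneg_left
        (aux_sum_div_sqrt (fun t => ‖gt t‖ ^ 2) (fun t => sq_nonneg _) T) hpos
    have hfinal : c T * D ^ 2 / 2 + D / (2 * Real.sqrt 2) * (2 * Real.sqrt (S T))
        = Real.sqrt 2 * D * Real.sqrt (S T) := by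
      simp only [hcdef]
      have h2 : Real.sqrt 2 * Real.sqrt 2 = 2 := Real.mul_self_sqrt (by norm_num)
      have h3 : D ≠ 0 := ne_of_gt hDpos
      have h4 : Real.sqrt 2 ≠ 0 := ne_of_gt hs2
      field_simp
      linear_combination (-Real.sqrt (S T)) * h2
    calc ∑ t ∈ Icc 1 T, ⟪gt t, w t - wstar⟫
        ≤ (∑ t ∈ Icc 1 T, c t * (a t - a (t + 1)) / 2)
          + ∑ t ∈ Icc 1 T, ‖gt t‖ ^ 2 / (2 * c t) := hsum
      _ ≤ c T * D ^ 2 / 2 + D / (2 * Real.sqrt 2) * (2 * Real.sqrt (S T)) := by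
          have := hA'
          rw [← Finset.sum_div]
          rw [← Finset.sum_div] at this
          linarith [hBsum]
      _ = Real.sqrt 2 * D * Real.sqrt (S T) := hfinal
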